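/- Let α be a nonzero rational number. For graded chain complexes A and B (chain complexes of graded vector spaces), the truncation τ satisfies τ(A)_n^p ⊗ τ(B)_m^q ⊆ τ(A⊗B)_{n+m}^{p+q}; hence τ is a lax symmetric monoidal endofunctor of graded chain complexes. -/

import Mathlib

open CategoryTheory Limits MonoidalCategory HomologicalComplex

noncomputable instance : (ComplexShape.down ℤ).TensorSigns where
  ε' := MonoidHom.mk' Int.negOnePow Int.negOnePow_add
  rel_add p q r (hpq : q + 1 = p) := by simp only [ComplexShape.down_Rel]; omega
  add_rel p q r (hpq : q + 1 = p) := by simp only [ComplexShape.down_Rel]; omega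
  ε'_succ := by
    rintro p q rfl
    show Int.negOnePow q = - Int.negOnePow (q + 1)
    rw [Int.negOnePow_succ]
    simp

instance {C : Type*} [Category C] [MonoidalCategory C] [Preadditive C] [MonoidalPreadditive C] :
    (curriedTensor C).Additive where
  map_add := by
    intros
    ext X
    exact MonoidalPreadditive.add_whiskerRight ..

instance {C : Type*} [Category C] [MonoidalCategory C] [Preadditive C] [MonoidalPreadditive C]
    (X : C) : ((curriedTensor C).obj X).Additive where
  map_add := by
    intros
    exact MonoidalPreadditive.whiskerLeft_add ..

/-- The truncation-submodule of a chain complex `C` at threshold `c` in degree `k`: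
all of `C.X k` if `k > c`, the cycles if `k = c`, and `0` if `k < c`. -/
noncomputable def tauSubmodule (C : ChainComplex (ModuleCat ℚ) ℤ) (c k : ℤ) :
    Submodule ℚ (C.X k) :=
  if c < k then ⊤ else if k = c then LinearMap.ker (C.d k (k - 1)).hom else ⊥

set_option maxHeartbeats 1000000 in
/-- Let `α ≠ 0` be rational.  For graded chain complexes, the truncation `τ` (with
threshold `⌈p/α⌉` on the piece of extra grading `p`) satisfies
`τ(A)_n^p ⊗ τ(B)_m^q ⊆ τ(A⊗B)_{n+m}^{p+q}`: if `ιA : KA ⟶ CA` and `ιB : KB ⟶ CB`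
are the inclusions of the truncations of the graded pieces of weights `p` and `q`
(characterized by their degreewise images), then in every degree `k` the image of
`ιA ⊗ ιB` is contained in the truncation-submodule of `CA ⊗ CB` at threshold
`⌈(p+q)/α⌉`; hence `τ` is lax symmetric monoidal. -/
theorem truncation_lax_monoidal (α : ℚ) (hα : α ≠ 0)
    (CA CB KA KB : ChainComplex (ModuleCat ℚ) ℤ) (p q : ℤ)
    (ιA : KA ⟶ CA) (ιB : KB ⟶ CB)
    (hA : ∀ k : ℤ, LinearMap.range (ιA.f k).hom = tauSubmodule CA ⌈(p : ℚ) / α⌉ k)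
    (hB : ∀ k : ℤ, LinearMap.range (ιB.f k).hom = tauSubmodule CB ⌈(q : ℚ) / α⌉ k)
    (k : ℤ) :
    LinearMap.range ((HomologicalComplex.tensorHom ιA ιB).f k).hom
      ≤ tauSubmodule (HomologicalComplex.tensorObj CA CB) ⌈((p : ℚ) + (q : ℚ)) / α⌉ k := by
  set cA : ℤ := ⌈(p : ℚ) / α⌉ with hcA
  set cB : ℤ := ⌈(q : ℚ) / α⌉ with hcB
  set c : ℤ := ⌈((p : ℚ) + (q : ℚ)) / α⌉ with hcdef
  have hc : c ≤ cA + cB := by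
    rw [hcdef, add_div]
    exact Int.ceil_add_le _ _
  have hA0 : ∀ i : ℤ, i < cA → ιA.f i = 0 := by
    intro i hi
    have h := hA i
    rw [tauSubmodule, if_neg (by omega), if_neg (by omega)] at h
    exact ModuleCat.hom_ext (by rw [ModuleCat.hom_zero]; exact LinearMap.range_eq_bot.mp h)
  have hB0 : ∀ i : ℤ, i < cB → ιB.f i = 0 := by
    intro i hi
    have h := hB i
    rw [tauSubmodule, if_neg (by omega), if_neg (by omega)] at h
    exact ModuleCat.hom_ext (by rw [ModuleCat.hom_zero]; exact LinearMap.range_eq_bot.mp h)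
  have hAd : ιA.f cA ≫ CA.d cA (cA - 1) = 0 := by
    apply ModuleCat.hom_ext
    apply LinearMap.ext
    intro x
    have hx : (ιA.f cA).hom x ∈ LinearMap.range (ιA.f cA).hom := ⟨x, rfl⟩
    rw [hA cA, tauSubmodule, if_neg (lt_irrefl _), if_pos rfl] at hx
    exact hx
  have hBd : ιB.f cB ≫ CB.d cB (cB - 1) = 0 := by
    apply ModuleCat.hom_ext
    apply LinearMap.ext
    intro x
    have hx : (ιB.f cB).hom x ∈ LinearMap.range (ιB.f cB).hom := ⟨x, rfl⟩
    rw [hB cB, tauSubmodule, if_neg (lt_irrefl _), if_pos rfl] at hx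
    exact hx
  by_cases hk : c < k
  · rw [tauSubmodule, if_pos hk]; exact le_top
  push_neg at hk
  rcases eq_or_lt_of_le hk with hkc | hkc
  · -- k = c
    rw [tauSubmodule, if_neg (by omega), if_pos hkc]
    have hzero : (HomologicalComplex.tensorHom ιA ιB).f k ≫ (HomologicalComplex.tensorObj CA CB).d k (k - 1) = 0 := by
      apply mapBifunctor.hom_ext
      intro i₁ i₂ hij
      have hij' : i₁ + i₂ = k := hij
      rw [comp_zero, reassoc_of% (ι_mapBifunctorMap ιA ιB (curriedTensor (ModuleCat ℚ))
        (ComplexShape.down ℤ) i₁ i₂ k hij)]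
      by_cases h1 : i₁ < cA
      · rw [hA0 i₁ h1, Functor.map_zero, Limits.zero_app, zero_comp]
      · by_cases h2 : i₂ < cB
        · rw [hB0 i₂ h2, Functor.map_zero, zero_comp, comp_zero]
        · have e1 : i₁ = cA := by omega
          have e2 : i₂ = cB := by omega
          subst e1 e2
          have r1 : (ComplexShape.down ℤ).Rel cA (cA - 1) := by simp [ComplexShape.down]
          have r2 : (ComplexShape.down ℤ).Rel cB (cB - 1) := by simp [ComplexShape.down]
          rw [mapBifunctor.d_eq, Preadditive.comp_add,
            mapBifunctor.ι_D₁ _ _ _ _ _ _ _ _ hij, mapBifunctor.ι_D₂ _ _ _ _ _ _ _ _ hij,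
            mapBifunctor.d₁_eq' _ _ _ _ r1, mapBifunctor.d₂_eq' _ _ _ _ _ r2]
          simp only [curriedTensor_map_app, curriedTensor_obj_map,
            Linear.comp_units_smul, Preadditive.comp_add, Category.assoc,
            MonoidalCategory.whisker_exchange_assoc,
            ← MonoidalCategory.comp_whiskerRight_assoc,
            ← MonoidalCategory.whiskerLeft_comp_assoc, hAd, hBd,
            MonoidalPreadditive.whiskerLeft_zero, MonoidalPreadditive.zero_whiskerRight,
            Limits.zero_comp, Limits.comp_zero, smul_zero, add_zero]
    exact LinearMap.range_le_ker_iff.mpr (by rw [← ModuleCat.hom_comp, hzero, ModuleCat.hom_zero])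
  · -- k < c
    rw [tauSubmodule, if_neg (by omega), if_neg (by omega)]
    have hzero : (HomologicalComplex.tensorHom ιA ιB).f k = 0 := by
      apply mapBifunctor.hom_ext
      intro i₁ i₂ hij
      have hij' : i₁ + i₂ = k := hij
      rw [comp_zero, ι_mapBifunctorMap]
      by_cases h1 : i₁ < cA
      · rw [hA0 i₁ h1, Functor.map_zero, Limits.zero_app, zero_comp]
      · rw [hB0 i₂ (by omega), Functor.map_zero, zero_comp, comp_zero]
    exact (LinearMap.range_eq_bot.mpr (by rw [hzero, ModuleCat.hom_zero])).le
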